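/- Fix real numbers ω > 0, h > 0, and β ≥ 0, and take α = 1/2 in the Newmark method. If ω²·h²·(1/4 − β) < 1, then the two nonzero complex eigenvalues of the Newmark amplification matrix T_{1/2,β,ω,h} are non-real complex conjugates of absolute value exactly 1. In particular, within its stability range the Newmark method with α = 1/2 (e.g. the trapezoidal rule β = 1/4 or Fox–Goodwin β = 1/12) introduces no numerical damping. -/

import Mathlib

/-- The Newmark amplification matrix `T_{α,β,ω,h}` for the scalar oscillator
`ẍ = -ω²·x`, acting on states `(x, v, a) ∈ ℝ³`: it sends `(x, v, a)` to the
unique `(x', v', a')` with `x' = (x + h·v + (1/2 − β)·h²·a)/(1 + β·ω²·h²)`,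
`a' = −ω²·x'`, `v' = v + h·((1 − α)·a + α·a')`. -/
noncomputable def NewmarkMatrix (ω h α β : ℝ) : Matrix (Fin 3) (Fin 3) ℝ :=
  let D := 1 + β * ω ^ 2 * h ^ 2
  !![1 / D, h / D, (1 / 2 - β) * h ^ 2 / D;
     -(α * ω ^ 2 * h) / D, 1 - α * ω ^ 2 * h ^ 2 / D,
       h * (1 - α) - α * (1 / 2 - β) * ω ^ 2 * h ^ 3 / D;
     -ω ^ 2 / D, -(ω ^ 2 * h) / D, -((1 / 2 - β) * ω ^ 2 * h ^ 2) / D]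

private lemma newmark_hasEigenvalue_iff_det (M : Matrix (Fin 3) (Fin 3) ℂ) (ν : ℂ) :
    Module.End.HasEigenvalue (Matrix.toLin' M) ν ↔ (M - ν • 1).det = 0 := by
  constructor
  · intro hν
    obtain ⟨v, hmem, hne⟩ := hν.exists_hasEigenvector
    rw [← Matrix.exists_mulVec_eq_zero_iff]
    refine ⟨v, hne, ?_⟩
    have h1 : M.mulVec v = ν • v := by
      have := Module.End.mem_eigenspace_iff.mp hmem
      rwa [Matrix.toLin'_apply] at this
    rw [Matrix.sub_mulVec, Matrix.smul_mulVec, Matrix.one_mulVec, h1, sub_self]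
  · intro hdet
    obtain ⟨v, hne, hv⟩ := Matrix.exists_mulVec_eq_zero_iff.mpr hdet
    refine Module.End.hasEigenvalue_of_hasEigenvector
      (x := v) ⟨Module.End.mem_eigenspace_iff.mpr ?_, hne⟩
    rw [Matrix.toLin'_apply]
    rw [Matrix.sub_mulVec, Matrix.smul_mulVec, Matrix.one_mulVec, sub_eq_zero] at hv
    exact hv

/-- The auxiliary polynomial matrix `D • NewmarkMatrix` (complexified). -/
private noncomputable def NewmarkN (ω h β : ℝ) : Matrix (Fin 3) (Fin 3) ℂ :=
  !![1, (h:ℂ), ((1:ℂ) / 2 - β) * h ^ 2;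
     -((ω:ℂ) ^ 2 * h / 2), 1 + (β:ℂ) * ω ^ 2 * h ^ 2 - (ω:ℂ) ^ 2 * h ^ 2 / 2,
       (h:ℂ) / 2 * (1 + (β:ℂ) * ω ^ 2 * h ^ 2) - ((1:ℂ) / 2 - β) * ω ^ 2 * h ^ 3 / 2;
     -((ω:ℂ) ^ 2), -((ω:ℂ) ^ 2 * h), -(((1:ℂ) / 2 - β) * ω ^ 2 * h ^ 2)]

set_option maxHeartbeats 1600000 in
private lemma newmark_map_eq (ω h β : ℝ) (hD : (1 + β * ω ^ 2 * h ^ 2) ≠ 0) :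
    (NewmarkMatrix ω h (1 / 2) β).map Complex.ofReal
      = (((1 + β * ω ^ 2 * h ^ 2 : ℝ) : ℂ))⁻¹ • NewmarkN ω h β := by
  have hDc : ((1 + β * ω ^ 2 * h ^ 2 : ℝ) : ℂ) ≠ 0 := by exact_mod_cast hD
  have h2 : (1 + (ω:ℂ) ^ 2 * h ^ 2 * β) ≠ 0 := by push_cast at hDc; ring_nf at hDc ⊢; exact hDc
  have h3 : (1 + (h:ℂ) ^ 2 * β * ω ^ 2) ≠ 0 := by push_cast at hDc; ring_nf at hDc ⊢; exact hDc
  ext i j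
  fin_cases i <;> fin_cases j <;>
    simp only [NewmarkMatrix, NewmarkN, Matrix.map_apply, Matrix.smul_apply,
      Matrix.cons_val', Matrix.cons_val_zero, Matrix.cons_val_one, Matrix.head_cons,
      Matrix.empty_val', Matrix.cons_val_fin_one, Matrix.of_apply, Matrix.cons_val, Matrix.head_fin_const, smul_eq_mul] <;>
    push_cast at hDc ⊢ <;> field_simp <;> ring

set_option maxHeartbeats 1600000 in
private lemma newmarkN_det (ω h β : ℝ) (ν : ℂ) :
    (NewmarkN ω h β - (ν * ((1 + β * ω ^ 2 * h ^ 2 : ℝ) : ℂ)) • 1).det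
      = -(((1 + β * ω ^ 2 * h ^ 2 : ℝ) : ℂ) ^ 2 * ν *
          (((1 + β * ω ^ 2 * h ^ 2 : ℝ) : ℂ) * ν ^ 2
            - ((2 - ω ^ 2 * h ^ 2 * (1 - 2 * β) : ℝ) : ℂ) * ν
            + ((1 + β * ω ^ 2 * h ^ 2 : ℝ) : ℂ))) := by
  simp [NewmarkN, Matrix.det_fin_three, Matrix.one_apply]
  ring

set_option maxHeartbeats 1600000 in
private lemma newmark_det (ω h β : ℝ) (hD : (1 + β * ω ^ 2 * h ^ 2) ≠ 0) (ν : ℂ) :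
    ((NewmarkMatrix ω h (1 / 2) β).map Complex.ofReal - ν • 1).det
      = -(ν * (ν ^ 2
          - (((2 - ω ^ 2 * h ^ 2 * (1 - 2 * β)) / (1 + β * ω ^ 2 * h ^ 2) : ℝ) : ℂ) * ν
          + 1)) := by
  have hDc : ((1 + β * ω ^ 2 * h ^ 2 : ℝ) : ℂ) ≠ 0 := by exact_mod_cast hD
  have key : (NewmarkMatrix ω h (1 / 2) β).map Complex.ofReal - ν • 1
      = (((1 + β * ω ^ 2 * h ^ 2 : ℝ) : ℂ))⁻¹
          • (NewmarkN ω h β - (ν * ((1 + β * ω ^ 2 * h ^ 2 : ℝ) : ℂ)) • 1) := by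
    rw [newmark_map_eq ω h β hD, smul_sub, smul_smul]
    congr 2
    rw [mul_comm ν, ← mul_assoc, inv_mul_cancel₀ hDc, one_mul]
  rw [key, Matrix.det_smul, newmarkN_det]
  simp only [Fintype.card_fin]
  rw [Complex.ofReal_div]
  have hinv : (((1 + β * ω ^ 2 * h ^ 2 : ℝ) : ℂ))⁻¹ * ((1 + β * ω ^ 2 * h ^ 2 : ℝ) : ℂ) = 1 :=
    inv_mul_cancel₀ hDc
  linear_combination ((-(ν ^ 3 + ν)) *
      (((((1 + β * ω ^ 2 * h ^ 2 : ℝ) : ℂ))⁻¹ * ((1 + β * ω ^ 2 * h ^ 2 : ℝ) : ℂ)) ^ 2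
        + (((1 + β * ω ^ 2 * h ^ 2 : ℝ) : ℂ))⁻¹ * ((1 + β * ω ^ 2 * h ^ 2 : ℝ) : ℂ) + 1)
    + ((2 - ω ^ 2 * h ^ 2 * (1 - 2 * β) : ℝ) : ℂ) * ν ^ 2 *
        (((1 + β * ω ^ 2 * h ^ 2 : ℝ) : ℂ))⁻¹ *
        ((((1 + β * ω ^ 2 * h ^ 2 : ℝ) : ℂ))⁻¹ * ((1 + β * ω ^ 2 * h ^ 2 : ℝ) : ℂ) + 1)) * hinv


/-- For α = 1/2 and β ≥ 0, if `ω²·h²·(1/4 − β) < 1` then the two nonzero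
complex eigenvalues of the Newmark amplification matrix are non-real complex
conjugates of absolute value exactly 1: within its stability range, the
Newmark method with α = 1/2 introduces no numerical damping. -/
theorem newmark_alpha_half_no_damping (ω h β : ℝ)
    (hω : 0 < ω) (hh : 0 < h) (hβ : 0 ≤ β)
    (hstab : ω ^ 2 * h ^ 2 * (1 / 4 - β) < 1) :
    ∃ μ : ℂ, μ.im ≠ 0 ∧ ‖μ‖ = 1 ∧
      Module.End.HasEigenvalue
        (Matrix.toLin' ((NewmarkMatrix ω h (1 / 2) β).map Complex.ofReal)) μ ∧
      Module.End.HasEigenvalue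
        (Matrix.toLin' ((NewmarkMatrix ω h (1 / 2) β).map Complex.ofReal))
        ((starRingEnd ℂ) μ) ∧
      ∀ ν : ℂ,
        Module.End.HasEigenvalue
          (Matrix.toLin' ((NewmarkMatrix ω h (1 / 2) β).map Complex.ofReal)) ν →
        ν = 0 ∨ ν = μ ∨ ν = (starRingEnd ℂ) μ := by
  have hs : 0 < ω ^ 2 * h ^ 2 := by positivity
  have hDpos : 0 < 1 + β * ω ^ 2 * h ^ 2 := by nlinarith
  have hD : (1 + β * ω ^ 2 * h ^ 2) ≠ 0 := ne_of_gt hDpos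
  set T : ℝ := (2 - ω ^ 2 * h ^ 2 * (1 - 2 * β)) / (1 + β * ω ^ 2 * h ^ 2) with hTdef
  have hT1 : T < 2 := by
    rw [hTdef, div_lt_iff₀ hDpos]; nlinarith
  have hT2 : -2 < T := by
    rw [hTdef, lt_div_iff₀ hDpos]; nlinarith
  have hT4 : T ^ 2 < 4 := by nlinarith
  have hr0 : 0 < 1 - (T / 2) ^ 2 := by nlinarith
  set r : ℝ := Real.sqrt (1 - (T / 2) ^ 2) with hrdef
  have hrpos : 0 < r := Real.sqrt_pos.mpr hr0
  have hrsq : r * r = 1 - (T / 2) ^ 2 := Real.mul_self_sqrt (le_of_lt hr0)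
  have hsum : (⟨T / 2, r⟩ : ℂ) + (starRingEnd ℂ) ⟨T / 2, r⟩ = (T : ℂ) := by
    rw [Complex.add_conj]
    push_cast [Complex.ofReal_mul]
    norm_num
    ring
  have hprod : (⟨T / 2, r⟩ : ℂ) * (starRingEnd ℂ) ⟨T / 2, r⟩ = 1 := by
    rw [Complex.mul_conj]
    norm_cast
    simp only [Complex.normSq_mk]
    nlinarith
  have hfact : ∀ ν : ℂ, ν ^ 2 - (T : ℂ) * ν + 1
      = (ν - ⟨T / 2, r⟩) * (ν - (starRingEnd ℂ) ⟨T / 2, r⟩) := by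
    intro ν
    linear_combination ν * hsum - hprod
  have hdet : ∀ ν : ℂ,
      Module.End.HasEigenvalue
        (Matrix.toLin' ((NewmarkMatrix ω h (1 / 2) β).map Complex.ofReal)) ν ↔
      -(ν * ((ν - ⟨T / 2, r⟩) * (ν - (starRingEnd ℂ) ⟨T / 2, r⟩))) = 0 := by
    intro ν
    rw [newmark_hasEigenvalue_iff_det, newmark_det ω h β hD ν, ← hfact ν, ← hTdef]
  refine ⟨⟨T / 2, r⟩, ne_of_gt hrpos, ?_, ?_, ?_, ?_⟩
  · have hnorm : Complex.normSq ⟨T / 2, r⟩ = 1 := by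
      simp only [Complex.normSq_mk]
      nlinarith
    rw [Complex.norm_def, hnorm, Real.sqrt_one]
  · exact (hdet _).mpr (by simp)
  · exact (hdet _).mpr (by simp)
  · intro ν hν
    have h0 := (hdet ν).mp hν
    rw [neg_eq_zero, mul_eq_zero, mul_eq_zero, sub_eq_zero, sub_eq_zero] at h0
    tauto
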